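/- Let α ∈ [π/4, π] and β ∈ [0, 3π/4] with cos α · cos β − sin(α − β) = 0. Let p : [0,1] → ℝ be continuous and strictly positive, let σ ∈ ℝ with σ ≠ 0, and let u : [0,1] → ℝ be twice continuously differentiable with u''(x) = σ²·p(x)·u(x) for all x ∈ [0,1], u strictly positive on (0,1), and u satisfying BC(α,β). Then a contradiction follows (no such u exists). -/

import Mathlib

open Real

/-- Separated boundary conditions BC(α,β) on [0,1]. -/
def BC (α β : ℝ) (w : ℝ → ℝ) : Prop :=
  w 0 * Real.cos α + deriv w 0 * Real.sin α = 0 ∧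
  w 1 * Real.cos β + deriv w 1 * Real.sin β = 0

/-- Core of Theorem 3.3, first case: on the curve cos α cos β − sin(α−β) = 0
there is no negative eigenvalue with positive eigenfunction. -/
theorem stmt_13 (α β : ℝ)
    (hα : α ∈ Set.Icc (Real.pi / 4) Real.pi)
    (hβ : β ∈ Set.Icc (0:ℝ) (3 * Real.pi / 4))
    (hcurve : Real.cos α * Real.cos β - Real.sin (α - β) = 0)
    (p : ℝ → ℝ) (hp : Continuous p)
    (hppos : ∀ x ∈ Set.Icc (0:ℝ) 1, 0 < p x)
    (σ : ℝ) (hσ : σ ≠ 0) (u : ℝ → ℝ) (hu : ContDiff ℝ 2 u)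
    (hode : ∀ x ∈ Set.Icc (0:ℝ) 1, deriv (deriv u) x = σ ^ 2 * p x * u x)
    (hupos : ∀ x ∈ Set.Ioo (0:ℝ) 1, 0 < u x)
    (hbc : BC α β u) :
    False := by
  obtain ⟨hα1, hα2⟩ := hα
  obtain ⟨hβ1, hβ2⟩ := hβ
  have hπ := Real.pi_pos
  -- the comparison function w(x) = sin α - x cos α (linear, satisfies BC(α,β) by hcurve)
  set w : ℝ → ℝ := fun x => Real.sin α - x * Real.cos α with hwdef
  have hsinα : 0 ≤ Real.sin α := Real.sin_nonneg_of_nonneg_of_le_pi (by linarith) hα2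
  have hsqrt2 : 0 < Real.sqrt 2 := Real.sqrt_pos.mpr (by norm_num)
  have hsc : 0 ≤ Real.sin α - Real.cos α := by
    have h : 0 ≤ Real.sin (α - Real.pi / 4) :=
      Real.sin_nonneg_of_nonneg_of_le_pi (by linarith) (by linarith)
    rw [Real.sin_sub, Real.cos_pi_div_four, Real.sin_pi_div_four] at h
    nlinarith
  have hpyth := Real.sin_sq_add_cos_sq α
  have hwpos : ∀ x ∈ Set.Ioo (0:ℝ) 1, 0 < w x := by
    intro x hx
    obtain ⟨hx0, hx1⟩ := hx
    simp only [hwdef]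
    rcases lt_or_eq_of_le hsinα with hs | hs
    · nlinarith [mul_nonneg hx0.le hsc, mul_pos (sub_pos.mpr hx1) hs]
    · have hc : Real.cos α = -1 := by nlinarith
      rw [← hs, hc]; linarith
  -- w satisfies the boundary condition at 1 (from the curve condition)
  have hwbc1 : (Real.sin α - Real.cos α) * Real.cos β + (-Real.cos α) * Real.sin β = 0 := by
    rw [Real.sin_sub] at hcurve; linarith
  -- smoothness facts
  have hu1 : ContDiff ℝ 1 (deriv u) := ((contDiff_succ_iff_deriv (n := 1)).mp hu).2.2
  have hudiff : Differentiable ℝ u := hu.differentiable (by norm_num)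
  have hu1diff : Differentiable ℝ (deriv u) := hu1.differentiable (by norm_num)
  have hu2cont : Continuous (deriv (deriv u)) := (contDiff_one_iff_deriv.mp hu1).2
  have hwcont : Continuous w := by
    simp only [hwdef]; fun_prop
  -- Green's identity: ∫ u'' w = [u' w - u w']₀¹
  set g : ℝ → ℝ := fun x => deriv u x * w x + u x * Real.cos α with hgdef
  have hg : ∀ x ∈ Set.uIcc (0:ℝ) 1, HasDerivAt g (deriv (deriv u) x * w x) x := by
    intro x _
    have hdw : HasDerivAt w (-Real.cos α) x := by
      simpa using (HasDerivAt.const_sub (Real.sin α) (hasDerivAt_mul_const (Real.cos α) (x := x)))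
    have h1 : HasDerivAt (deriv u) (deriv (deriv u) x) x := (hu1diff x).hasDerivAt
    have h2 : HasDerivAt u (deriv u x) x := (hudiff x).hasDerivAt
    have := ((h1.mul hdw).add (h2.mul_const (Real.cos α)))
    refine this.congr_deriv ?_
    ring
  have hint : IntervalIntegrable (fun x => deriv (deriv u) x * w x) MeasureTheory.volume 0 1 :=
    (hu2cont.mul hwcont).intervalIntegrable 0 1
  have key : ∫ x in (0:ℝ)..1, deriv (deriv u) x * w x = g 1 - g 0 :=
    intervalIntegral.integral_eq_sub_of_hasDerivAt hg hint
  -- boundary terms vanish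
  have hg0 : g 0 = 0 := by
    have := hbc.1
    simp only [hgdef, hwdef]
    nlinarith [hbc.1]
  have hg1 : g 1 = 0 := by
    have h1 := hbc.2
    set A := u 1; set A' := deriv u 1
    have e1 : (A' * (Real.sin α - Real.cos α) - A * (-Real.cos α)) * Real.cos β = 0 := by
      linear_combination A' * hwbc1 - (-Real.cos α) * h1
    have e2 : (A' * (Real.sin α - Real.cos α) - A * (-Real.cos α)) * Real.sin β = 0 := by
      linear_combination (Real.sin α - Real.cos α) * h1 - A * hwbc1
    have hW : A' * (Real.sin α - Real.cos α) - A * (-Real.cos α) = 0 := by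
      have hp2 := Real.sin_sq_add_cos_sq β
      linear_combination (-(A' * (Real.sin α - Real.cos α) - A * (-Real.cos α))) * hp2
        + Real.sin β * e2 + Real.cos β * e1
    simp only [hgdef, hwdef]
    linarith [hW]
  -- rewrite the integrand using the ODE
  have hcong : ∫ x in (0:ℝ)..1, deriv (deriv u) x * w x
      = ∫ x in (0:ℝ)..1, σ ^ 2 * p x * u x * w x := by
    apply intervalIntegral.integral_congr
    intro x hx
    rw [Set.uIcc_of_le zero_le_one] at hx
    show deriv (deriv u) x * w x = σ ^ 2 * p x * u x * w x
    rw [hode x hx]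
  -- but the right-hand side is strictly positive
  have hint2 : IntervalIntegrable (fun x => σ ^ 2 * p x * u x * w x) MeasureTheory.volume 0 1 :=
    (((continuous_const.mul hp).mul hu.continuous).mul hwcont).intervalIntegrable 0 1
  have hσ2 : 0 < σ ^ 2 := pow_two_pos_of_ne_zero hσ
  have hpos : 0 < ∫ x in (0:ℝ)..1, σ ^ 2 * p x * u x * w x := by
    apply intervalIntegral.intervalIntegral_pos_of_pos_on hint2 _ one_pos
    intro x hx
    exact mul_pos (mul_pos (mul_pos hσ2 (hppos x (Set.Ioo_subset_Icc_self hx)))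
      (hupos x hx)) (hwpos x hx)
  rw [hcong, hg0, hg1] at key
  simp at key
  rw [key] at hpos
  exact lt_irrefl 0 hpos
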